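/- arXiv:1308.4919 — 3 statements merged into one kernel-verified Lean document; each statement's English description precedes it below -/
import Mathlib

section
/- Let ε > 0, T > 0, r ∈ ℝ, and let p : ℝ → ℝ have support contained in [−ε, ε]. Suppose φ : ℝ → ℝ satisfies the functional equation φ(s) = −r·p(s − T) + r·φ(s − T) for all s ∈ ℝ, and φ(s) = 0 for all s < T − ε. Then for every s ∈ ℝ, φ(s) = −Σ_{k=1}^∞ r^k p(s − kT), and this sum is finite in the sense that p(s − kT) = 0 whenever k > (s + ε)/T. -/
/-- The left-moving wave profile: if `φ(s) = −r·p(s−T) + r·φ(s−T)` for all `s`, `φ`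
vanishes on `(−∞, T−ε)`, and `p` is supported in `[−ε, ε]`, then
`φ(s) = −Σ_{k=1}^∞ r^k p(s − kT)`, the sum being finite since `p(s − kT) = 0` once
`k > (s + ε)/T`. -/
theorem left_moving_wave_series
    (ε T r : ℝ) (hε : 0 < ε) (hT : 0 < T)
    (p φ : ℝ → ℝ)
    (hsupp : Function.support p ⊆ Set.Icc (-ε) ε)
    (hrec : ∀ s : ℝ, φ s = -r * p (s - T) + r * φ (s - T))
    (hzero : ∀ s : ℝ, s < T - ε → φ s = 0) :
    ∀ s : ℝ,
      (φ s = -∑' k : ℕ, r ^ (k + 1) * p (s - (k + 1) * T)) ∧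
      (∀ k : ℕ, (s + ε) / T < (k : ℝ) → p (s - k * T) = 0) := by
  intro s
  have hpz : ∀ k : ℕ, (s + ε) / T < (k : ℝ) → p (s - k * T) = 0 := by
    intro k hk
    by_contra h
    have hx := hsupp (Function.mem_support.mpr h)
    have hkT : s + ε < k * T := by
      have := (div_lt_iff₀ hT).mp hk
      linarith
    have : s - k * T < -ε := by linarith
    have := hx.1
    linarith
  refine ⟨?_, hpz⟩
  have key : ∀ n : ℕ, φ s =
      -(∑ k ∈ Finset.range n, r ^ (k + 1) * p (s - (k + 1) * T)) + r ^ n * φ (s - n * T) := by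
    intro n
    induction n with
    | zero => simp
    | succ n ih =>
      rw [ih, hrec (s - n * T), Finset.sum_range_succ]
      have h1 : s - n * T - T = s - (n + 1 : ℕ) * T := by push_cast; ring
      rw [h1]
      push_cast
      ring
  obtain ⟨n, hn⟩ := exists_nat_gt ((s + ε) / T)
  have hφn : φ (s - n * T) = 0 := by
    apply hzero
    have hkT : s + ε < n * T := by
      have := (div_lt_iff₀ hT).mp hn
      linarith
    linarith
  have htsum : (∑' k : ℕ, r ^ (k + 1) * p (s - (k + 1) * T)) =
      ∑ k ∈ Finset.range n, r ^ (k + 1) * p (s - (k + 1) * T) := by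
    apply tsum_eq_sum
    intro k hk
    have hkn : n ≤ k := by simpa using hk
    have : (s + ε) / T < ((k + 1 : ℕ) : ℝ) := by
      push_cast
      have : (n : ℝ) ≤ k := by exact_mod_cast hkn
      linarith
    have h0 := hpz (k + 1) this
    push_cast at h0
    rw [h0, mul_zero]
  rw [htsum, key n, hφn]
  ring
end

section
/- Let p : ℝ → ℝ be compactly supported, let c_+ > 0 > c_−, let N > 0, and set r = c_−/c_+ and T = (1/c_+ − 1/c_−)·N (note T > 0). Define ψ(s) = Σ_{k=0}^∞ r^k p(s − kT) and φ(s) = −Σ_{k=1}^∞ r^k p(s − kT) (both sums have only finitely many nonzero terms at each s). Then for all t ∈ ℝ: (i) ψ(t) + φ(t) = p(t) (the prescribed right boundary condition at agent 0), and (ii) c_−·ψ(t − N/c_+) + c_+·φ(t − N/c_−) = 0 (the free left boundary condition at agent N). -/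
/-- The reflection series `ψ(s) = Σ_{k=0}^∞ r^k p(s − kT)` and
`φ(s) = −Σ_{k=1}^∞ r^k p(s − kT)`, with `r = c_−/c_+` and `T = (1/c_+ − 1/c_−)N`,
satisfy the prescribed right boundary condition `ψ(t) + φ(t) = p(t)` and the free
left boundary condition `c_−ψ(t − N/c_+) + c_+φ(t − N/c_−) = 0`. -/
theorem reflection_series_boundary_conditions
    (p : ℝ → ℝ) (hp : HasCompactSupport p)
    (cplus cminus N : ℝ) (hcp : 0 < cplus) (hcm : cminus < 0) (hN : 0 < N)
    (r T : ℝ) (hr : r = cminus / cplus) (hT : T = (1 / cplus - 1 / cminus) * N)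
    (ψ φ : ℝ → ℝ)
    (hψ : ∀ s : ℝ, ψ s = ∑' k : ℕ, r ^ k * p (s - k * T))
    (hφ : ∀ s : ℝ, φ s = -∑' k : ℕ, r ^ (k + 1) * p (s - (k + 1) * T)) :
    (∀ t : ℝ, ψ t + φ t = p t) ∧
    (∀ t : ℝ, cminus * ψ (t - N / cplus) + cplus * φ (t - N / cminus) = 0) := by
  have hcp' : cplus ≠ 0 := ne_of_gt hcp
  have hcm' : cminus ≠ 0 := ne_of_lt hcm
  have hT0 : 0 < T := by
    rw [hT]
    have h1 : 0 < 1 / cplus := by positivity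
    have h2 : 1 / cminus < 0 := one_div_neg.mpr hcm
    nlinarith
  obtain ⟨M, hM⟩ : ∃ M : ℝ, ∀ x : ℝ, M < |x| → p x = 0 := by
    obtain ⟨M, hM⟩ := hp.isBounded.subset_closedBall 0
    refine ⟨M, fun x hx => ?_⟩
    by_contra h
    have hx' : x ∈ Metric.closedBall (0 : ℝ) M :=
      hM (subset_tsupport p (by simpa using h))
    rw [Metric.mem_closedBall, Real.dist_eq, sub_zero] at hx'
    linarith
  have hsum : ∀ s : ℝ, Summable (fun k : ℕ => r ^ k * p (s - k * T)) := by
    intro s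
    apply summable_of_ne_finset_zero (s := Finset.range (⌈(s + M) / T⌉₊ + 1))
    intro k hk
    simp only [Finset.mem_range, not_lt] at hk
    have hkR : (s + M) / T < (k : ℝ) := by
      calc (s + M) / T ≤ (⌈(s + M) / T⌉₊ : ℝ) := Nat.le_ceil _
        _ < (k : ℝ) := by exact_mod_cast Nat.lt_of_succ_le hk
    have hlt : s + M < k * T := by rwa [div_lt_iff₀ hT0] at hkR
    have hp0 : p (s - k * T) = 0 := by
      apply hM
      exact lt_abs.mpr (Or.inr (by linarith))
    rw [hp0, mul_zero]
  constructor
  · intro t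
    rw [hψ t, hφ t, Summable.tsum_eq_zero_add (hsum t)]
    push_cast
    simp only [pow_zero, zero_mul, sub_zero, one_mul]
    ring
  · intro t
    rw [hψ _, hφ _]
    have e1 : (∑' k : ℕ, r ^ (k + 1) * p ((t - N / cminus) - ((k : ℝ) + 1) * T))
        = ∑' k : ℕ, r ^ (k + 1) * p ((t - N / cplus) - (k : ℝ) * T) := by
      congr 1
      funext k
      congr 2
      rw [hT]
      field_simp
      ring
    have h2 : (∑' k : ℕ, cplus * (r ^ (k + 1) * p ((t - N / cplus) - (k : ℝ) * T)))
        = ∑' k : ℕ, cminus * (r ^ k * p ((t - N / cplus) - (k : ℝ) * T)) := by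
      congr 1
      funext k
      rw [hr, pow_succ]
      field_simp
    rw [e1, mul_neg, ← tsum_mul_left, ← tsum_mul_left, h2]
    ring
end

section
/- Fix g_x < 0, g_v < 0, r ∈ (−1, 0), and N ≥ 2. Consider the 2N-dimensional linear system for (z₁,…,z_N, ż₁,…,ż_N) given by: z̈_k = g_x[(−1−r)z_{k−1} + z_k + r·z_{k+1}] + g_v[(−1−r)ż_{k−1} + ż_k + r·ż_{k+1}] for k ∈ {1,…,N−1} (with z₀ ≡ 0 and ż₀ ≡ 0), and the regular boundary condition z̈_N = g_x(z_N − z_{N−1}) + g_v(ż_N − ż_{N−1}). Then this system is asymptotically stable: every eigenvalue of its 2N × 2N coefficient matrix has strictly negative real part. -/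
open Complex in
lemma quad_root_re_neg (b c : ℝ) (hb : 0 < b) (hc : 0 < c) (μ : ℂ)
    (h : μ^2 + (b:ℂ)*μ + (c:ℂ) = 0) : μ.re < 0 := by
  set ν : ℂ := μ + (b/2 : ℝ) with hν
  have hsq : ν^2 = ((b^2/4 - c : ℝ) : ℂ) := by
    push_cast
    rw [hν]; push_cast; ring_nf
    ring_nf at h
    linear_combination h
  have him : ν.re * ν.im + ν.im * ν.re = 0 := by
    have := congrArg Complex.im hsq
    simpa [pow_two, Complex.mul_im] using this
  have hre : μ.re = ν.re - b/2 := by rw [hν]; simp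
  have hprod : ν.re * ν.im = 0 := by linarith
  rcases mul_eq_zero.mp hprod with h1 | h2
  · rw [hre, h1]; linarith
  · have hre2 : ν.re^2 = b^2/4 - c := by
      have := congrArg Complex.re hsq
      rw [pow_two, Complex.mul_re, h2] at this
      simpa [pow_two] using this
    have : ν.re < b/2 := by nlinarith
    rw [hre]; linarith

lemma exists_eigvec {n : Type*} [Fintype n] [DecidableEq n] (A : Matrix n n ℂ) (μ : ℂ)
    (h : μ ∈ spectrum ℂ A) : ∃ v, v ≠ 0 ∧ A.mulVec v = μ • v := by
  rw [spectrum.mem_iff, Matrix.isUnit_iff_isUnit_det, isUnit_iff_ne_zero, not_not] at h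
  obtain ⟨v, hv, hv2⟩ := Matrix.exists_mulVec_eq_zero_iff.mpr h
  refine ⟨v, hv, ?_⟩
  rw [Matrix.sub_mulVec] at hv2
  have halg : (algebraMap ℂ (Matrix n n ℂ)) μ = μ • (1 : Matrix n n ℂ) := by
    simp [Algebra.algebraMap_eq_smul_one]
  rw [halg, Matrix.smul_mulVec, Matrix.one_mulVec] at hv2
  exact (sub_eq_zero.mp hv2).symm

lemma row_eq (r : ℝ) (N : ℕ) (hN : 2 ≤ N)
    (L : Matrix (Fin N) (Fin N) ℝ)
    (hL : ∀ i j : Fin N,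
      L i j =
        if (i : ℕ) = N - 1 then
          (if j = i then 1 else if (j : ℕ) + 1 = (i : ℕ) then -1 else 0)
        else
          (if j = i then 1
           else if (j : ℕ) = (i : ℕ) + 1 then r
           else if (j : ℕ) + 1 = (i : ℕ) then -1 - r
           else 0))
    (x : Fin N → ℂ) (i : Fin N) :
    ((L.map (algebraMap ℝ ℂ)).mulVec x) i =
      if h : (i:ℕ) = N - 1 then x i - x ⟨N-2, by omega⟩
      else (if h0 : (i:ℕ) = 0 then 0 else ((-1-r : ℝ):ℂ) * x ⟨(i:ℕ)-1, by have := i.isLt; omega⟩)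
           + x i + ((r:ℝ):ℂ) * x ⟨(i:ℕ)+1, by have := i.isLt; omega⟩ := by
  have hilt := i.isLt
  show ∑ j, (algebraMap ℝ ℂ) (L i j) * x j = _
  by_cases h : (i:ℕ) = N - 1
  · rw [dif_pos h]
    have key : ∀ j : Fin N, (algebraMap ℝ ℂ) (L i j) * x j =
        (if j = i then x j else 0)
        + (if j = (⟨N-2, by omega⟩ : Fin N) then (-1:ℂ) * x j else 0) := by
      intro j
      rw [hL i j, if_pos h]
      rcases eq_or_ne j i with hj | hj
      · subst hj
        rw [if_pos rfl, if_pos rfl, if_neg (by simp only [Fin.ext_iff]; omega)]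
        simp
      · by_cases hj2 : (j:ℕ) + 1 = (i:ℕ)
        · rw [if_neg hj, if_pos hj2, if_neg hj, if_pos (by simp only [Fin.ext_iff]; omega)]
          simp
        · rw [if_neg hj, if_neg hj2, if_neg hj, if_neg (by simp only [Fin.ext_iff]; omega)]
          simp
    rw [Finset.sum_congr rfl (fun j _ => key j), Finset.sum_add_distrib,
      Finset.sum_ite_eq' Finset.univ i (fun j => x j),
      Finset.sum_ite_eq' Finset.univ _ (fun j => (-1:ℂ) * x j)]
    simp only [Finset.mem_univ, if_true]; push_cast; ring
  · rw [dif_neg h]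
    by_cases h0 : (i:ℕ) = 0
    · rw [dif_pos h0]
      have key : ∀ j : Fin N, (algebraMap ℝ ℂ) (L i j) * x j =
          (if j = i then x j else 0)
          + (if j = (⟨(i:ℕ)+1, by omega⟩ : Fin N) then ((r:ℝ):ℂ) * x j else 0) := by
        intro j
        rw [hL i j, if_neg h]
        rcases eq_or_ne j i with hj | hj
        · subst hj
          rw [if_pos rfl, if_pos rfl, if_neg (by simp only [Fin.ext_iff]; omega)]
          simp
        · by_cases hj1 : (j:ℕ) = (i:ℕ) + 1
          · rw [if_neg hj, if_pos hj1, if_neg hj, if_pos (by simp only [Fin.ext_iff]; omega)]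
            simp
          · have hj2 : ¬((j:ℕ) + 1 = (i:ℕ)) := by omega
            rw [if_neg hj, if_neg hj1, if_neg hj2, if_neg hj,
              if_neg (by simp only [Fin.ext_iff]; omega)]
            simp
      rw [Finset.sum_congr rfl (fun j _ => key j), Finset.sum_add_distrib,
        Finset.sum_ite_eq' Finset.univ i (fun j => x j),
        Finset.sum_ite_eq' Finset.univ _ (fun j => ((r:ℝ):ℂ) * x j)]
      simp only [Finset.mem_univ, if_true]; push_cast; ring
    · rw [dif_neg h0]
      have key : ∀ j : Fin N, (algebraMap ℝ ℂ) (L i j) * x j =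
          (if j = i then x j else 0)
          + (if j = (⟨(i:ℕ)+1, by omega⟩ : Fin N) then ((r:ℝ):ℂ) * x j else 0)
          + (if j = (⟨(i:ℕ)-1, by omega⟩ : Fin N) then ((-1-r:ℝ):ℂ) * x j else 0) := by
        intro j
        rw [hL i j, if_neg h]
        rcases eq_or_ne j i with hj | hj
        · subst hj
          rw [if_pos rfl, if_pos rfl, if_neg (by simp only [Fin.ext_iff]; omega),
            if_neg (by simp only [Fin.ext_iff]; omega)]
          simp
        · by_cases hj1 : (j:ℕ) = (i:ℕ) + 1
          · rw [if_neg hj, if_pos hj1, if_neg hj, if_pos (by simp only [Fin.ext_iff]; omega),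
              if_neg (by simp only [Fin.ext_iff]; omega)]
            simp
          · by_cases hj2 : (j:ℕ) + 1 = (i:ℕ)
            · rw [if_neg hj, if_neg hj1, if_pos hj2, if_neg hj,
                if_neg (by simp only [Fin.ext_iff]; omega),
                if_pos (by simp only [Fin.ext_iff]; omega)]
              simp
            · rw [if_neg hj, if_neg hj1, if_neg hj2, if_neg hj,
                if_neg (by simp only [Fin.ext_iff]; omega),
                if_neg (by simp only [Fin.ext_iff]; omega)]
              simp
      rw [Finset.sum_congr rfl (fun j _ => key j), Finset.sum_add_distrib,
        Finset.sum_add_distrib,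
        Finset.sum_ite_eq' Finset.univ i (fun j => x j),
        Finset.sum_ite_eq' Finset.univ _ (fun j => ((r:ℝ):ℂ) * x j),
        Finset.sum_ite_eq' Finset.univ _ (fun j => ((-1-r:ℝ):ℂ) * x j)]
      simp only [Finset.mem_univ, if_true]; push_cast; ring

lemma eig_re_pos (r : ℝ) (hr : r ∈ Set.Ioo (-1:ℝ) 0) (N : ℕ) (hN : 2 ≤ N)
    (L : Matrix (Fin N) (Fin N) ℝ)
    (hL : ∀ i j : Fin N,
      L i j =
        if (i : ℕ) = N - 1 then
          (if j = i then 1 else if (j : ℕ) + 1 = (i : ℕ) then -1 else 0)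
        else
          (if j = i then 1
           else if (j : ℕ) = (i : ℕ) + 1 then r
           else if (j : ℕ) + 1 = (i : ℕ) then -1 - r
           else 0))
    (lam : ℂ) (u : Fin N → ℂ) (hu : u ≠ 0)
    (heig : (L.map (algebraMap ℝ ℂ)).mulVec u = lam • u) :
    0 < lam.re := by
  obtain ⟨hr1, hr2⟩ := hr
  by_contra hcon
  push_neg at hcon
  -- |1 - lam| ≥ 1
  have hone : 1 ≤ ‖1 - lam‖ := by
    have h1 : (1 - lam).re = 1 - lam.re := by simp
    have := Complex.abs_re_le_norm (1 - lam)
    rw [h1] at this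
    have : 1 - lam.re ≤ |1 - lam.re| := le_abs_self _
    calc (1:ℝ) ≤ 1 - lam.re := by linarith
    _ ≤ |1 - lam.re| := le_abs_self _
    _ ≤ ‖1 - lam‖ := by rw [← h1]; exact Complex.abs_re_le_norm _
  -- the max
  have hne : (Finset.univ : Finset (Fin N)).Nonempty := ⟨⟨0, by omega⟩, Finset.mem_univ _⟩
  set m : ℝ := Finset.univ.sup' hne (fun k => ‖u k‖) with hm
  have hub : ∀ k, ‖u k‖ ≤ m := fun k => Finset.le_sup' (fun k => ‖u k‖) (Finset.mem_univ k)
  have hm0 : 0 < m := by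
    obtain ⟨k, hk⟩ := Function.ne_iff.mp hu
    calc (0:ℝ) < ‖u k‖ := by
          simpa using (norm_pos_iff).mpr (by simpa using hk)
    _ ≤ m := hub k
  -- row equations
  have hrow : ∀ i : Fin N, ((L.map (algebraMap ℝ ℂ)).mulVec u) i = lam * u i := by
    intro i; rw [heig]; rfl
  -- descent
  have hdesc : ∀ k : ℕ, (hk : k + 1 < N) → m ≤ ‖u ⟨k+1, hk⟩‖ →
      m ≤ ‖u ⟨k, by omega⟩‖ := by
    intro k hk hmk
    have hrk := hrow ⟨k+1, hk⟩
    rw [row_eq r N hN L hL u ⟨k+1, hk⟩] at hrk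
    by_cases hlast : k + 1 = N - 1
    · rw [dif_pos hlast] at hrk
      -- u ⟨N-2⟩ = (1 - lam) * u ⟨k+1⟩, and ⟨N-2⟩ = ⟨k⟩
      have hk2 : (⟨N-2, by omega⟩ : Fin N) = ⟨k, by omega⟩ := by
        simp only [Fin.ext_iff]; omega
      rw [hk2] at hrk
      have he : u ⟨k, by omega⟩ = (1 - lam) * u ⟨k+1, hk⟩ := by linear_combination -hrk
      calc m ≤ ‖u ⟨k+1, hk⟩‖ := hmk
      _ = 1 * ‖u ⟨k+1, hk⟩‖ := by ring
      _ ≤ ‖1 - lam‖ * ‖u ⟨k+1, hk⟩‖ := by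
            apply mul_le_mul_of_nonneg_right hone (norm_nonneg _)
      _ = ‖u ⟨k, by omega⟩‖ := by rw [he, norm_mul]
    · rw [dif_neg hlast, dif_neg (by simp only [Fin.val_mk]; omega : ¬ ((⟨k+1, hk⟩ : Fin N) : ℕ) = 0)] at hrk
      -- (-1-r) u_k + u_{k+1} + r u_{k+2} = lam u_{k+1}
      have hk2N : k + 2 < N := by omega
      have hidx1 : ((⟨k+1, hk⟩ : Fin N) : ℕ) - 1 = k := by simp only [Fin.val_mk]; omega
      have hidx2 : ((⟨k+1, hk⟩ : Fin N) : ℕ) + 1 = k + 2 := by simp only [Fin.val_mk]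
      -- normalize the indices in hrk
      have heq : ((1+r : ℝ):ℂ) * u ⟨k, by omega⟩ =
          (1 - lam) * u ⟨k+1, hk⟩ + ((r:ℝ):ℂ) * u ⟨k+2, hk2N⟩ := by
        have h1 : (⟨((⟨k+1, hk⟩ : Fin N) : ℕ) - 1, by have := hk; omega⟩ : Fin N) = ⟨k, by omega⟩ := by
          simp only [Fin.ext_iff]; omega
        have h2 : (⟨((⟨k+1, hk⟩ : Fin N) : ℕ) + 1, by have := hk; omega⟩ : Fin N) = ⟨k+2, hk2N⟩ := by
          simp only [Fin.ext_iff]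
        rw [h1, h2] at hrk
        push_cast at hrk ⊢
        linear_combination -hrk
      have habs : (1+r) * ‖u ⟨k, by omega⟩‖ + (-r) * m ≥ 1 * m := by
        have e1 : ‖((1+r:ℝ):ℂ) * u ⟨k, by omega⟩‖ = (1+r) * ‖u ⟨k, by omega⟩‖ := by
          rw [norm_mul, Complex.norm_real, Real.norm_eq_abs, abs_of_pos (by linarith)]
        have e2 : ‖((r:ℝ):ℂ) * u ⟨k+2, hk2N⟩‖ = (-r) * ‖u ⟨k+2, hk2N⟩‖ := by
          rw [norm_mul, Complex.norm_real, Real.norm_eq_abs, abs_of_neg hr2]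
        have e3 : 1 * m ≤ ‖(1-lam) * u ⟨k+1, hk⟩‖ := by
          rw [norm_mul]
          exact mul_le_mul hone hmk (le_of_lt hm0) (norm_nonneg _)
        have tri : ‖(1-lam) * u ⟨k+1, hk⟩‖ ≤
            ‖((1+r:ℝ):ℂ) * u ⟨k, by omega⟩‖ + ‖((r:ℝ):ℂ) * u ⟨k+2, hk2N⟩‖ := by
          have : (1-lam) * u ⟨k+1, hk⟩ =
              ((1+r:ℝ):ℂ) * u ⟨k, by omega⟩ + (-(((r:ℝ):ℂ) * u ⟨k+2, hk2N⟩)) := by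
            linear_combination -heq
          rw [this]
          calc ‖_‖ ≤ ‖((1+r:ℝ):ℂ) * u ⟨k, by omega⟩‖ + ‖-(((r:ℝ):ℂ) * u ⟨k+2, hk2N⟩)‖ := norm_add_le _ _
          _ = _ := by rw [norm_neg]
        have hu2 : ‖u ⟨k+2, hk2N⟩‖ ≤ m := hub _
        rw [e1, e2] at tri
        nlinarith [e3, tri]
      nlinarith [habs]
  -- reach index 0
  have hzero : ∀ k : ℕ, (hk : k < N) → m ≤ ‖u ⟨k, hk⟩‖ →
      m ≤ ‖u ⟨0, by omega⟩‖ := by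
    intro k
    induction k with
    | zero => intro hk h; exact h
    | succ n ih => intro hk h; exact ih (by omega) (hdesc n hk h)
  obtain ⟨k₀, _, hk₀⟩ := Finset.exists_mem_eq_sup' hne (fun k => ‖u k‖)
  have h0 : m ≤ ‖u ⟨0, by omega⟩‖ := by
    apply hzero k₀ k₀.isLt
    simp only [Fin.eta]
    exact le_of_eq hk₀
  -- first row contradiction
  have hr0 := hrow ⟨0, by omega⟩
  rw [row_eq r N hN L hL u ⟨0, by omega⟩, dif_neg (by simp only [Fin.val_mk]; omega : ¬ ((⟨0, by omega⟩ : Fin N):ℕ) = N - 1),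
    dif_pos rfl] at hr0
  have he0 : (1 - lam) * u ⟨0, by omega⟩ = (-(r:ℝ):ℂ) * u ⟨1, by omega⟩ := by
    push_cast at hr0 ⊢
    linear_combination hr0
  have : 1 * m ≤ (-r) * m := by
    calc 1 * m ≤ ‖1-lam‖ * ‖u ⟨0, by omega⟩‖ :=
          mul_le_mul hone h0 (le_of_lt hm0) (norm_nonneg _)
    _ = ‖(1-lam) * u ⟨0, by omega⟩‖ := (norm_mul _ _).symm
    _ = ‖(-(r:ℝ):ℂ) * u ⟨1, by omega⟩‖ := by rw [he0]
    _ = (-r) * ‖u ⟨1, by omega⟩‖ := by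
          rw [norm_mul]
          norm_num [Complex.norm_real, Real.norm_eq_abs, abs_of_neg hr2]
    _ ≤ (-r) * m := by
          apply mul_le_mul_of_nonneg_left (hub _) (by linarith)
  nlinarith

lemma eig_real (r : ℝ) (hr : r ∈ Set.Ioo (-1:ℝ) 0) (N : ℕ) (hN : 2 ≤ N)
    (L : Matrix (Fin N) (Fin N) ℝ)
    (hL : ∀ i j : Fin N,
      L i j =
        if (i : ℕ) = N - 1 then
          (if j = i then 1 else if (j : ℕ) + 1 = (i : ℕ) then -1 else 0)
        else
          (if j = i then 1
           else if (j : ℕ) = (i : ℕ) + 1 then r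
           else if (j : ℕ) + 1 = (i : ℕ) then -1 - r
           else 0))
    (lam : ℂ) (u : Fin N → ℂ) (hu : u ≠ 0)
    (heig : (L.map (algebraMap ℝ ℂ)).mulVec u = lam • u) : lam.im = 0 := by
  obtain ⟨hr1, hr2⟩ := hr
  have h1r : (0:ℝ) < 1 + r := by linarith
  set q : ℝ := (-r)/(1+r) with hq
  have hq0 : 0 < q := div_pos (by linarith) h1r
  set p : Fin N → ℝ := fun k => (if (k:ℕ) = N-1 then (1+r) else 1) * q^(k:ℕ) with hp
  have hppos : ∀ k, 0 < p k := by
    intro k; rw [hp]; dsimp only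
    split <;> positivity
  have aux : ∀ i j : Fin N, (i:ℕ) < (j:ℕ) → p i * L i j = p j * L j i := by
    intro i j hij
    have hiN := i.isLt; have hjN := j.isLt
    rw [hL i j, hL j i]
    have hiNe : ¬ (i:ℕ) = N - 1 := by omega
    rw [if_neg hiNe, if_neg (by simp only [Fin.ext_iff]; omega : ¬ j = i)]
    by_cases hadj : (j:ℕ) = (i:ℕ) + 1
    · rw [if_pos hadj]
      by_cases hjN1 : (j:ℕ) = N - 1
      · rw [if_pos hjN1, if_neg (by simp only [Fin.ext_iff]; omega : ¬ i = j),
          if_pos (by omega : (i:ℕ) + 1 = (j:ℕ))]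
        rw [hp]; dsimp only
        rw [if_neg hiNe, if_pos hjN1, hadj, pow_succ, hq]
        field_simp
      · rw [if_neg hjN1, if_neg (by simp only [Fin.ext_iff]; omega : ¬ i = j),
          if_neg (by omega : ¬ (i:ℕ) = (j:ℕ) + 1),
          if_pos (by omega : (i:ℕ) + 1 = (j:ℕ))]
        rw [hp]; dsimp only
        rw [if_neg hiNe, if_neg hjN1, hadj, pow_succ, hq]
        field_simp
        ring
    · rw [if_neg hadj, if_neg (by omega : ¬ (j:ℕ) + 1 = (i:ℕ))]
      by_cases hjN1 : (j:ℕ) = N - 1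
      · rw [if_pos hjN1, if_neg (by simp only [Fin.ext_iff]; omega : ¬ i = j),
          if_neg (by omega : ¬ (i:ℕ) + 1 = (j:ℕ))]
        ring
      · rw [if_neg hjN1, if_neg (by simp only [Fin.ext_iff]; omega : ¬ i = j),
          if_neg (by omega : ¬ (i:ℕ) = (j:ℕ) + 1),
          if_neg (by omega : ¬ (i:ℕ) + 1 = (j:ℕ))]
        ring
  obtain ⟨k0, hk0⟩ := Function.ne_iff.mp hu
  set Q : ℝ := ∑ k, p k * Complex.normSq (u k) with hQ
  have hQpos : 0 < Q := by
    rw [hQ]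
    apply Finset.sum_pos' (fun i _ => mul_nonneg (le_of_lt (hppos i)) (Complex.normSq_nonneg _))
    refine ⟨k0, Finset.mem_univ _, mul_pos (hppos k0) ?_⟩
    exact Complex.normSq_pos.mpr (by simpa using hk0)
  set S : ℂ := ∑ k, (p k : ℂ) * ((starRingEnd ℂ) (u k) * ((L.map (algebraMap ℝ ℂ)).mulVec u k)) with hS
  have hS1 : S = lam * (Q : ℂ) := by
    rw [hS, heig, hQ]
    push_cast
    rw [Finset.mul_sum]
    apply Finset.sum_congr rfl
    intro k _
    simp only [Pi.smul_apply, smul_eq_mul]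
    have hc : (starRingEnd ℂ) (u k) * u k = (Complex.normSq (u k) : ℂ) := by
      rw [mul_comm, Complex.mul_conj]
    calc (p k : ℂ) * ((starRingEnd ℂ) (u k) * (lam * u k))
        = lam * ((p k : ℂ) * ((starRingEnd ℂ) (u k) * u k)) := by ring
    _ = lam * ((p k : ℂ) * (Complex.normSq (u k) : ℂ)) := by rw [hc]
  have hS2 : (starRingEnd ℂ) S = S := by
    rw [hS, map_sum]
    have expand : ∀ k, (starRingEnd ℂ) ((p k : ℂ) * ((starRingEnd ℂ) (u k) * ((L.map (algebraMap ℝ ℂ)).mulVec u k)))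
        = ∑ j, ((p k * L k j : ℝ) : ℂ) * (u k * (starRingEnd ℂ) (u j)) := by
      intro k
      rw [map_mul, map_mul, Complex.conj_conj, Complex.conj_ofReal]
      show (p k : ℂ) * (u k * (starRingEnd ℂ) (∑ j, (algebraMap ℝ ℂ) (L k j) * u j)) = _
      rw [map_sum, Finset.mul_sum, Finset.mul_sum]
      apply Finset.sum_congr rfl; intro j _
      rw [map_mul]
      simp only [Complex.coe_algebraMap, Complex.conj_ofReal]
      push_cast
      ring
    calc ∑ k, (starRingEnd ℂ) ((p k : ℂ) * ((starRingEnd ℂ) (u k) * ((L.map (algebraMap ℝ ℂ)).mulVec u k)))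
        = ∑ k, ∑ j, ((p k * L k j : ℝ):ℂ) * (u k * (starRingEnd ℂ) (u j)) :=
          Finset.sum_congr rfl (fun k _ => expand k)
    _ = ∑ k, ∑ j, ((p j * L j k : ℝ):ℂ) * (u k * (starRingEnd ℂ) (u j)) := by
          apply Finset.sum_congr rfl; intro k _
          apply Finset.sum_congr rfl; intro j _
          rcases lt_trichotomy (k:ℕ) (j:ℕ) with h|h|h
          · rw [aux k j h]
          · have hkj : k = j := Fin.ext h
            subst hkj; rfl
          · rw [aux j k h]
    _ = ∑ j, ∑ k, ((p j * L j k : ℝ):ℂ) * (u k * (starRingEnd ℂ) (u j)) := Finset.sum_comm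
    _ = ∑ j, (p j : ℂ) * ((starRingEnd ℂ) (u j) * ((L.map (algebraMap ℝ ℂ)).mulVec u j)) := by
          apply Finset.sum_congr rfl; intro j _
          show _ = (p j : ℂ) * ((starRingEnd ℂ) (u j) * ∑ k, (algebraMap ℝ ℂ) (L j k) * u k)
          rw [Finset.mul_sum, Finset.mul_sum]
          apply Finset.sum_congr rfl; intro k _
          simp only [Complex.coe_algebraMap]
          push_cast
          ring
  have hfin : (starRingEnd ℂ) lam * (Q:ℂ) = lam * (Q:ℂ) := by
    have h2 := hS2
    rw [hS1, map_mul, Complex.conj_ofReal] at h2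
    exact h2
  have hQne : (Q:ℂ) ≠ 0 := by exact_mod_cast ne_of_gt hQpos
  have hconj : (starRingEnd ℂ) lam = lam := mul_right_cancel₀ hQne hfin
  exact Complex.conj_eq_iff_im.mp hconj

/-- Asymptotic stability of the leader-follower array `S_N` with regular boundary
conditions: for `g_x < 0`, `g_v < 0`, `r ∈ (−1, 0)` and `N ≥ 2`, every eigenvalue of
the `2N × 2N` coefficient matrix of the first-order system for `(z₁,…,z_N,ż₁,…,ż_N)`
(interior agents `z̈_k = g_x[(−1−r)z_{k−1} + z_k + r z_{k+1}] + g_v[(−1−r)ż_{k−1} +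
ż_k + r ż_{k+1}]` with `z₀ ≡ 0`, last agent `z̈_N = g_x(z_N − z_{N−1}) +
g_v(ż_N − ż_{N−1})`) has strictly negative real part. -/
theorem leader_follower_asymptotic_stability
    (gx gv r : ℝ) (hgx : gx < 0) (hgv : gv < 0)
    (hr : r ∈ Set.Ioo (-1 : ℝ) 0)
    (N : ℕ) (hN : 2 ≤ N)
    (L : Matrix (Fin N) (Fin N) ℝ)
    (hL : ∀ i j : Fin N,
      L i j =
        if (i : ℕ) = N - 1 then
          -- last agent (agent N): z_N − z_{N−1}
          (if j = i then 1 else if (j : ℕ) + 1 = (i : ℕ) then -1 else 0)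
        else
          -- interior agent k = i+1: (−1−r) z_{k−1} + z_k + r z_{k+1}, with z₀ ≡ 0
          (if j = i then 1
           else if (j : ℕ) = (i : ℕ) + 1 then r
           else if (j : ℕ) + 1 = (i : ℕ) then -1 - r
           else 0))
    (M : Matrix (Fin N ⊕ Fin N) (Fin N ⊕ Fin N) ℝ)
    (hM : M = Matrix.fromBlocks 0 1 (gx • L) (gv • L)) :
    ∀ μ : ℂ, μ ∈ spectrum ℂ (M.map (algebraMap ℝ ℂ)) → μ.re < 0 := by
  intro μ hμ
  obtain ⟨v, hv, hveq⟩ := exists_eigvec (M.map (algebraMap ℝ ℂ)) μ hμ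
  set x : Fin N → ℂ := v ∘ Sum.inl with hx
  set y : Fin N → ℂ := v ∘ Sum.inr with hy
  rw [hM, Matrix.fromBlocks_map, Matrix.fromBlocks_mulVec] at hveq
  have hmap0 : ((0 : Matrix (Fin N) (Fin N) ℝ).map (algebraMap ℝ ℂ)) = 0 := by
    ext i j; simp [Matrix.map_apply]
  have hmap1 : ((1 : Matrix (Fin N) (Fin N) ℝ).map (algebraMap ℝ ℂ)) = 1 := by
    ext i j; by_cases h : i = j <;> simp [Matrix.map_apply, Matrix.one_apply, h]
  have hmapgx : ((gx • L).map (algebraMap ℝ ℂ)) = (gx : ℂ) • (L.map (algebraMap ℝ ℂ)) := by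
    ext i j; simp [Matrix.map_apply, Matrix.smul_apply]
  have hmapgv : ((gv • L).map (algebraMap ℝ ℂ)) = (gv : ℂ) • (L.map (algebraMap ℝ ℂ)) := by
    ext i j; simp [Matrix.map_apply, Matrix.smul_apply]
  rw [hmap0, hmap1, hmapgx, hmapgv] at hveq
  -- top rows: y = μ • x
  have htop : y = μ • x := by
    funext i
    have h := congrFun hveq (Sum.inl i)
    simpa [Matrix.zero_mulVec, Matrix.one_mulVec, hx, hy] using h
  -- bottom rows
  have hbot : (gx:ℂ) • (L.map (algebraMap ℝ ℂ)).mulVec x + (gv:ℂ) • (L.map (algebraMap ℝ ℂ)).mulVec y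
      = μ • y := by
    funext i
    have h := congrFun hveq (Sum.inr i)
    simpa [Matrix.smul_mulVec, hx, hy] using h
  have hxne : x ≠ 0 := by
    intro hx0
    apply hv
    funext s
    rcases s with i | i
    · exact congrFun hx0 i
    · have : y = 0 := by rw [htop, hx0, smul_zero]
      exact congrFun this i
  have hkey : ((gx:ℂ) + gv * μ) • (L.map (algebraMap ℝ ℂ)).mulVec x = (μ^2) • x := by
    rw [htop, Matrix.mulVec_smul] at hbot
    funext i
    have h := congrFun hbot i
    simp only [Pi.add_apply, Pi.smul_apply, smul_eq_mul] at h ⊢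
    linear_combination h
  by_cases hc : (gx:ℂ) + gv * μ = 0
  · exfalso
    rw [hc, zero_smul] at hkey
    obtain ⟨i, hi⟩ := Function.ne_iff.mp hxne
    have h := congrFun hkey i
    simp only [Pi.zero_apply, Pi.smul_apply, smul_eq_mul] at h
    have hμ2 : μ^2 = 0 := by
      rcases mul_eq_zero.mp h.symm with h' | h'
      · exact h'
      · exact absurd h' (by simpa using hi)
    have hμ0 : μ = 0 := by
      exact pow_eq_zero_iff (by norm_num) |>.mp hμ2
    rw [hμ0, mul_zero, add_zero] at hc
    exact absurd (by exact_mod_cast hc) (ne_of_lt hgx)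
  · set lam : ℂ := μ^2 / ((gx:ℂ) + gv * μ) with hlam
    have heig : (L.map (algebraMap ℝ ℂ)).mulVec x = lam • x := by
      funext i
      have h := congrFun hkey i
      simp only [Pi.smul_apply, smul_eq_mul, Complex.coe_algebraMap] at h ⊢
      rw [hlam, div_mul_eq_mul_div, eq_div_iff hc]
      linear_combination h
    have him : lam.im = 0 := eig_real r hr N hN L hL lam x hxne heig
    have hre : 0 < lam.re := eig_re_pos r hr N hN L hL lam x hxne heig
    have hlamre : lam = ((lam.re : ℝ) : ℂ) := by
      apply Complex.ext <;> simp [him]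
    have hquad : μ^2 + ((-(gv * lam.re) : ℝ):ℂ) * μ + ((-(gx * lam.re) : ℝ):ℂ) = 0 := by
      have h2 : μ^2 = ((gx:ℂ) + gv * μ) * lam := by
        rw [hlam, mul_div_assoc', eq_div_iff hc]; ring
      rw [hlamre] at h2
      push_cast at h2 ⊢
      linear_combination h2
    exact quad_root_re_neg (-(gv * lam.re)) (-(gx * lam.re))
      (by nlinarith) (by nlinarith) μ hquad
end
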